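/- Let V be a vector space over ℚ admitting a countable spanning set, let p : V → ℝ be sublinear, let U be a ℚ-linear subspace of V, and let f : U → ℝ be a ℚ-linear map with f(x) ≤ p(x) for all x ∈ U. Then there exists a ℚ-linear map F : V → ℝ such that F(x) = f(x) for all x ∈ U and F(x) ≤ p(x) for all x ∈ V. -/

import Mathlib

open Set

section Aux

variable {V : Type*} [AddCommGroup V] [Module ℚ V]

/-- One-step extension for the ℚ Hahn–Banach theorem. -/
theorem hb_step (p : V → ℝ)
    (hp_hom : ∀ c : ℚ, 0 ≤ c → ∀ x : V, p (c • x) = (c : ℝ) * p x)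
    (hp_sub : ∀ x y : V, p (x + y) ≤ p x + p y)
    (g : V →ₗ.[ℚ] ℝ) (hg : ∀ x : g.domain, g x ≤ p x)
    (hdom : g.domain ≠ ⊤) :
    ∃ h, g < h ∧ ∀ x : h.domain, h x ≤ p x := by
  obtain ⟨y, -, hy⟩ : ∃ y ∈ (⊤ : Submodule ℚ V), y ∉ g.domain :=
    SetLike.exists_of_lt (lt_top_iff_ne_top.2 hdom)
  obtain ⟨c, le_c, c_le⟩ :
      ∃ c : ℝ, (∀ x : g.domain, g x - p ((x : V) - y) ≤ c) ∧
        (∀ x : g.domain, c ≤ p ((x : V) + y) - g x) := by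
    set Sn := (fun x : g.domain => g x - p ((x : V) - y)) '' Set.univ
    set Sp := (fun x : g.domain => p ((x : V) + y) - g x) '' Set.univ
    suffices h : (upperBounds Sn ∩ lowerBounds Sp).Nonempty by
      obtain ⟨c, hc1, hc2⟩ := h
      exact ⟨c, fun x => hc1 ⟨x, trivial, rfl⟩, fun x => hc2 ⟨x, trivial, rfl⟩⟩
    refine exists_between_of_forall_le (Set.Nonempty.image _ ⟨0, trivial⟩)
      (Set.Nonempty.image _ ⟨0, trivial⟩) ?_
    rintro a ⟨xn, -, rfl⟩ b ⟨xp, -, rfl⟩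
    dsimp only
    have key : g xn + g xp ≤ p ((xn : V) - y) + p ((xp : V) + y) := by
      have h1 : g xn + g xp = g (xn + xp) := (g.toFun.map_add xn xp).symm
      have h2 : g (xn + xp) ≤ p ((xn : V) + xp) := hg _
      have h3 : p ((xn : V) + xp) ≤ p ((xn : V) - y) + p ((xp : V) + y) := by
        have := hp_sub ((xn : V) - y) ((xp : V) + y)
        have e : ((xn : V) - y) + ((xp : V) + y) = (xn : V) + xp := by abel
        rwa [e] at this
      calc g xn + g xp = g (xn + xp) := h1
        _ ≤ p ((xn : V) + xp) := h2
        _ ≤ p ((xn : V) - y) + p ((xp : V) + y) := h3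
    linarith
  refine ⟨g.supSpanSingleton y c hy, ?_, ?_⟩
  · refine lt_iff_le_not_ge.2 ⟨g.left_le_sup _ _, fun H => ?_⟩
    replace H := LinearPMap.domain_mono.monotone H
    rw [LinearPMap.domain_supSpanSingleton, sup_le_iff, Submodule.span_le,
      Set.singleton_subset_iff] at H
    exact hy H.2
  · rintro ⟨z, hz⟩
    rcases Submodule.mem_sup.1 hz with ⟨x, hx, y', hy', rfl⟩
    rcases Submodule.mem_span_singleton.1 hy' with ⟨r, rfl⟩
    rw [LinearPMap.supSpanSingleton_apply_mk _ _ _ _ _ hx]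
    rcases lt_trichotomy r 0 with (hr | hr | hr)
    · -- r < 0 : use le_c with (-r)⁻¹ • x
      set s : ℚ := -r with hs
      have hs0 : (0:ℚ) < s := by simpa [hs] using neg_pos.2 hr
      have hxi : s⁻¹ • x ∈ g.domain := g.domain.smul_mem _ hx
      have h1 : g ⟨s⁻¹ • x, hxi⟩ - p ((s⁻¹ • x) - y) ≤ c := le_c ⟨s⁻¹ • x, hxi⟩
      have hgsmul : g ⟨s⁻¹ • x, hxi⟩ = (s⁻¹ : ℝ) * g ⟨x, hx⟩ := by
        have : (⟨s⁻¹ • x, hxi⟩ : g.domain) = s⁻¹ • (⟨x, hx⟩ : g.domain) := rfl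
        rw [this, g.map_smul, Rat.smul_def]
        push_cast
        ring
      have hpsmul : p (x + r • y) = (s : ℝ) * p ((s⁻¹ • x) - y) := by
        have e : s • ((s⁻¹ • x) - y) = x + r • y := by
          rw [smul_sub, smul_smul, mul_inv_cancel₀ hs0.ne', one_smul]
          rw [hs]; module
        rw [← e, hp_hom s hs0.le]
      rw [hpsmul]
      have hs0' : (0:ℝ) < (s:ℝ) := by exact_mod_cast hs0
      have := mul_le_mul_of_nonneg_left h1 hs0'.le
      rw [mul_sub, hgsmul, ← mul_assoc] at this
      have hss : (s:ℝ) * ((s:ℝ))⁻¹ = 1 :=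
        mul_inv_cancel₀ (by exact_mod_cast hs0.ne')
      rw [hss, one_mul] at this
      have hr' : (r : ℝ) = -(s : ℝ) := by rw [hs]; push_cast; ring
      rw [Rat.smul_def, RingHom.id_apply, hr']
      linarith [this]
    · subst hr
      simp only [RingHom.id_apply, zero_smul, add_zero, Rat.cast_zero, zero_mul, Rat.smul_def]
      have := hg ⟨x, hx⟩
      push_cast
      linarith [this]
    · -- r > 0 : use c_le with r⁻¹ • x
      have hxi : r⁻¹ • x ∈ g.domain := g.domain.smul_mem _ hx
      have h1 : c ≤ p ((r⁻¹ • x) + y) - g ⟨r⁻¹ • x, hxi⟩ := c_le ⟨r⁻¹ • x, hxi⟩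
      have hgsmul : g ⟨r⁻¹ • x, hxi⟩ = (r⁻¹ : ℝ) * g ⟨x, hx⟩ := by
        have : (⟨r⁻¹ • x, hxi⟩ : g.domain) = r⁻¹ • (⟨x, hx⟩ : g.domain) := rfl
        rw [this, g.map_smul, Rat.smul_def]
        push_cast
        ring
      have hpsmul : p (x + r • y) = (r : ℝ) * p ((r⁻¹ • x) + y) := by
        have e : r • ((r⁻¹ • x) + y) = x + r • y := by
          rw [smul_add, smul_smul, mul_inv_cancel₀ hr.ne', one_smul]
        rw [← e, hp_hom r hr.le]
      rw [hpsmul]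
      have hr0' : (0:ℝ) < (r:ℝ) := by exact_mod_cast hr
      have := mul_le_mul_of_nonneg_left h1 hr0'.le
      rw [mul_sub, hgsmul, ← mul_assoc] at this
      have hrr : (r:ℝ) * ((r:ℝ))⁻¹ = 1 :=
        mul_inv_cancel₀ (by exact_mod_cast hr.ne')
      rw [hrr, one_mul] at this
      rw [Rat.smul_def, RingHom.id_apply]
      linarith [this]

end Aux

/-- Constructive Hahn–Banach theorem over ℚ-vector spaces with a countable spanning set. -/
theorem hahn_banach_rat (V : Type*) [AddCommGroup V] [Module ℚ V]
    (hspan : ∃ s : Set V, s.Countable ∧ Submodule.span ℚ s = ⊤)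
    (p : V → ℝ)
    (hp_hom : ∀ c : ℚ, 0 ≤ c → ∀ x : V, p (c • x) = (c : ℝ) * p x)
    (hp_sub : ∀ x y : V, p (x + y) ≤ p x + p y)
    (U : Submodule ℚ V) (f : U →ₗ[ℚ] ℝ)
    (hf : ∀ x : U, f x ≤ p x) :
    ∃ F : V →ₗ[ℚ] ℝ, (∀ x : U, F x = f x) ∧ ∀ x : V, F x ≤ p x := by
  set f₀ : V →ₗ.[ℚ] ℝ := ⟨U, f⟩ with hf₀
  set S := { g : V →ₗ.[ℚ] ℝ | ∀ x : g.domain, g x ≤ p x }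
  have hSc : ∀ c, c ⊆ S → IsChain (· ≤ ·) c → ∀ y ∈ c, ∃ ub ∈ S, ∀ z ∈ c, z ≤ ub := by
    intro c hcs c_chain y hy
    have cne : c.Nonempty := ⟨y, hy⟩
    have hcd : DirectedOn (· ≤ ·) c := c_chain.directedOn
    refine ⟨LinearPMap.sSup c hcd, ?_, fun _ => LinearPMap.le_sSup hcd⟩
    rintro ⟨x, hx⟩
    have hdir : DirectedOn (· ≤ ·) (LinearPMap.domain '' c) :=
      directedOn_image.2 (hcd.mono LinearPMap.domain_mono.monotone)
    rcases (Submodule.mem_sSup_of_directed (cne.image _) hdir).1 hx with ⟨_, ⟨g, hgc, rfl⟩, hgx⟩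
    have hle : g ≤ LinearPMap.sSup c hcd := LinearPMap.le_sSup _ hgc
    have := hcs hgc ⟨x, hgx⟩
    have heq := hle.2 (x := ⟨x, hgx⟩) (y := ⟨x, hx⟩) rfl
    rwa [heq] at this
  obtain ⟨q, hfq, hq⟩ := zorn_le_nonempty₀ S hSc f₀ hf
  have hqtop : q.domain = ⊤ := by
    by_contra hne
    rcases hb_step p hp_hom hp_sub q hq.prop hne with ⟨r, hqr, hr⟩
    exact hqr.ne (hq.eq_of_le hr hqr.le)
  obtain ⟨⟨q_dom, q'⟩, hq1, hq2⟩ : ∃ q', q' = q ∧ f₀ ≤ q' := ⟨q, rfl, hfq⟩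
  subst hq1
  simp only at hqtop
  subst hqtop
  refine ⟨q'.comp (LinearMap.id.codRestrict ⊤ fun _ => trivial), ?_, ?_⟩
  · intro x
    exact (hq2.2 (x := x) (y := ⟨(x : V), trivial⟩) rfl).symm
  · intro x
    exact hq.prop ⟨x, trivial⟩
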